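/- Let G be a finite simple graph whose vertex set is a set of points in the plane ℂ, with minimum degree δ = δ(G), and let k ≥ 1 be an integer with 2^(k−1) ≤ δ. Then for every vertex v of G, the number of irredundant walks p₀p₁⋯p_k in G with k edges starting at p₀ = v is at least ∏_{ℓ=0}^{k−1} (δ − 2^ℓ + 1). -/
import Mathlib


/-- A walk `p₀ p₁ ⋯ p_k` (encoded as `p : Fin (k+1) → V`, `V` a set of points of `ℂ`)
is irredundant if `∑_{i ∈ I} (p_{i+1} - p_i) ≠ 0` for every nonempty
`I ⊆ {0, …, k-1}`. -/
def IrredundantWalk {V : Finset ℂ} (G : SimpleGraph V) (k : ℕ)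
    (p : Fin (k + 1) → V) : Prop :=
  (∀ i : Fin k, G.Adj (p i.castSucc) (p i.succ)) ∧
    ∀ I : Finset (Fin k), I.Nonempty →
      (∑ i ∈ I, ((p i.succ : ℂ) - (p i.castSucc : ℂ))) ≠ 0

open Finset

namespace IrrAux

variable {V : Finset ℂ} (G : SimpleGraph V) [DecidableRel G.Adj] (v : V)

open Classical in
noncomputable def walkSet (n : ℕ) : Finset (Fin (n + 1) → V) :=
  Finset.univ.filter (fun p => p 0 = v ∧ IrredundantWalk G n p)

/-- forbidden complex values for the next vertex -/
noncomputable def forb (n : ℕ) (p : Fin (n + 1) → V) : Finset ℂ :=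
  (Finset.univ : Finset (Fin n)).powerset.image
    (fun I => (p (Fin.last n) : ℂ) - ∑ j ∈ I, ((p j.succ : ℂ) - (p j.castSucc : ℂ)))

open Classical in
noncomputable def ext (n : ℕ) (p : Fin (n + 1) → V) : Finset V :=
  (G.neighborFinset (p (Fin.last n))).filter (fun w : V => (w : ℂ) ∉ forb n p)

lemma last_mem_forb (n : ℕ) (p : Fin (n + 1) → V) :
    (p (Fin.last n) : ℂ) ∈ forb n p := by
  refine Finset.mem_image.2 ⟨∅, by simp, by simp⟩

lemma card_ext (n : ℕ) (p : Fin (n + 1) → V) (hn : 2 ^ n ≤ G.minDegree) :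
    G.minDegree + 1 - 2 ^ n ≤ (ext G n p).card := by
  classical
  have hE : ext G n p =
      (G.neighborFinset (p (Fin.last n))).filter (fun w : V => (w : ℂ) ∉ forb n p) := by
    simp [ext, Finset.filter_congr_decidable]
  have hdeg : G.minDegree ≤ (G.neighborFinset (p (Fin.last n))).card := by
    rw [G.card_neighborFinset_eq_degree]
    exact G.minDegree_le_degree _
  set B := (G.neighborFinset (p (Fin.last n))).filter
      (fun w : V => ¬ (w : ℂ) ∉ forb n p) with hB
  have hsplit : ((G.neighborFinset (p (Fin.last n))).filter
      (fun w : V => (w : ℂ) ∉ forb n p)).card + B.card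
      = (G.neighborFinset (p (Fin.last n))).card := by
    rw [hB]
    exact Finset.card_filter_add_card_filter_not _
  have hbad : B.card ≤ 2 ^ n - 1 := by
    have hinj : Set.InjOn (fun w : V => (w : ℂ)) ↑B :=
      fun a _ b _ h => Subtype.ext h
    have him : B.image (fun w : V => (w : ℂ)) ⊆ (forb n p).erase (p (Fin.last n) : ℂ) := by
      intro x hx
      simp only [hB, Finset.mem_image, Finset.mem_filter, not_not] at hx
      obtain ⟨w, ⟨hw1, hw2⟩, rfl⟩ := hx
      refine Finset.mem_erase.2 ⟨?_, hw2⟩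
      intro h
      have hww : w = p (Fin.last n) := Subtype.ext h
      exact (G.mem_neighborFinset _ _ |>.1 hw1).symm.ne (by rw [hww])
    calc B.card = (B.image (fun w : V => (w : ℂ))).card :=
          (Finset.card_image_of_injOn hinj).symm
      _ ≤ ((forb n p).erase (p (Fin.last n) : ℂ)).card := Finset.card_le_card him
      _ ≤ (forb n p).card - 1 := by
          rw [Finset.card_erase_of_mem (last_mem_forb n p)]
      _ ≤ 2 ^ n - 1 := by
          have h1 : (forb n p).card ≤ 2 ^ n := by
            calc (forb n p).card ≤ (Finset.univ : Finset (Fin n)).powerset.card :=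
                  Finset.card_image_le
              _ = 2 ^ n := by simp [Finset.card_powerset]
          omega
  rw [hE]
  have h1 : 1 ≤ 2 ^ n := Nat.one_le_two_pow
  obtain ⟨m, hm⟩ : ∃ m, 2 ^ n = m := ⟨_, rfl⟩
  rw [hm] at hn hbad h1 ⊢
  omega

lemma sum_step_no_last {n : ℕ} (p : Fin (n + 1) → V) (w : V)
    (I : Finset (Fin (n + 1))) (hlast : Fin.last n ∉ I) :
    ∑ i ∈ I, (((Fin.snoc p w : Fin (n + 2) → V) i.succ : ℂ)
        - ((Fin.snoc p w : Fin (n + 2) → V) i.castSucc : ℂ)) =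
      ∑ j ∈ I.preimage Fin.castSucc (Fin.castSucc_injective n).injOn,
        ((p j.succ : ℂ) - (p j.castSucc : ℂ)) := by
  rw [← Finset.sum_preimage (Fin.castSucc) I (Fin.castSucc_injective n).injOn
    (fun i => (((Fin.snoc p w : Fin (n + 2) → V) i.succ : ℂ)
        - ((Fin.snoc p w : Fin (n + 2) → V) i.castSucc : ℂ)))
    (fun x hx hx' => absurd
      ⟨x.castPred (fun h => hlast (h ▸ hx)), Fin.castSucc_castPred x _⟩ hx')]
  refine Finset.sum_congr rfl fun j hj => ?_
  rw [Fin.succ_castSucc, Fin.snoc_castSucc, Fin.snoc_castSucc]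

end IrrAux

namespace IrrAux

variable {V : Finset ℂ} (G : SimpleGraph V) [DecidableRel G.Adj] (v : V)

lemma snoc_mem {n : ℕ} {p : Fin (n + 1) → V} {w : V}
    (hp : p ∈ walkSet G v n) (hw : w ∈ ext G n p) :
    (Fin.snoc p w : Fin (n + 2) → V) ∈ walkSet G v (n + 1) := by
  classical
  simp only [walkSet, Finset.mem_filter, Finset.mem_univ, true_and] at hp ⊢
  obtain ⟨hp0, hadj, hirr⟩ := hp
  simp only [ext, Finset.mem_filter, SimpleGraph.mem_neighborFinset] at hw
  obtain ⟨hwadj, hwforb⟩ := hw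
  refine ⟨?_, ?_, ?_⟩
  · show (Fin.snoc p w : Fin (n + 2) → V) ((0 : Fin (n + 1)).castSucc) = v
    rw [Fin.snoc_castSucc]; exact hp0
  · intro i
    refine Fin.lastCases ?_ ?_ i
    · rw [Fin.succ_last, Fin.snoc_last, Fin.snoc_castSucc]
      exact hwadj
    · intro j
      rw [Fin.succ_castSucc, Fin.snoc_castSucc, Fin.snoc_castSucc]
      exact hadj j
  · intro I hI
    by_cases hlast : Fin.last n ∈ I
    · rw [← Finset.insert_erase hlast, Finset.sum_insert (Finset.notMem_erase _ _),
        sum_step_no_last p w _ (Finset.notMem_erase _ _),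
        Fin.succ_last, Fin.snoc_last, Fin.snoc_castSucc]
      intro h0
      apply hwforb
      refine Finset.mem_image.2 ⟨(I.erase (Fin.last n)).preimage Fin.castSucc
        (Fin.castSucc_injective n).injOn, Finset.mem_powerset.2 (Finset.subset_univ _), ?_⟩
      have : (w : ℂ) - (p (Fin.last n) : ℂ) =
          - ∑ j ∈ (I.erase (Fin.last n)).preimage Fin.castSucc
            (Fin.castSucc_injective n).injOn, ((p j.succ : ℂ) - (p j.castSucc : ℂ)) := by
        linear_combination h0
      linear_combination -this
    · rw [sum_step_no_last p w I hlast]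
      apply hirr
      obtain ⟨i, hi⟩ := hI
      have hne : i ≠ Fin.last n := fun h => hlast (h ▸ hi)
      exact ⟨i.castPred hne, Finset.mem_preimage.2 (by rw [Fin.castSucc_castPred]; exact hi)⟩

end IrrAux

namespace IrrAux

variable {V : Finset ℂ} (G : SimpleGraph V) [DecidableRel G.Adj] (v : V)

lemma card_step (n : ℕ) (hn : 2 ^ n ≤ G.minDegree) :
    (walkSet G v n).card * (G.minDegree + 1 - 2 ^ n) ≤ (walkSet G v (n + 1)).card := by
  classical
  set B := (walkSet G v n).biUnion
    (fun p => (ext G n p).image (fun w => (Fin.snoc p w : Fin (n + 2) → V))) with hB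
  have hsub : B ⊆ walkSet G v (n + 1) := by
    intro q hq
    simp only [hB, Finset.mem_biUnion, Finset.mem_image] at hq
    obtain ⟨p, hp, w, hw, rfl⟩ := hq
    exact snoc_mem G v hp hw
  have hcard : B.card = ∑ p ∈ walkSet G v n, ((ext G n p).image
      (fun w => (Fin.snoc p w : Fin (n + 2) → V))).card := by
    refine Finset.card_biUnion ?_
    intro p hp q hq hpq
    refine Finset.disjoint_left.2 ?_
    intro x hx hx'
    simp only [Finset.mem_image] at hx hx'
    obtain ⟨w, _, rfl⟩ := hx
    obtain ⟨w', _, he⟩ := hx'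
    apply hpq
    funext i
    have := congrFun he i.castSucc
    rw [Fin.snoc_castSucc, Fin.snoc_castSucc] at this
    exact this.symm
  have himg : ∀ p : Fin (n + 1) → V, ((ext G n p).image
      (fun w => (Fin.snoc p w : Fin (n + 2) → V))).card = (ext G n p).card := by
    intro p
    refine Finset.card_image_of_injective _ ?_
    intro w w' he
    have := congrFun he (Fin.last (n + 1))
    simpa using this
  calc (walkSet G v n).card * (G.minDegree + 1 - 2 ^ n)
      ≤ ∑ p ∈ walkSet G v n, (ext G n p).card := by
        refine le_trans (le_of_eq ?_) (Finset.sum_le_sum fun p _ => card_ext G n p hn)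
        rw [Finset.sum_const, smul_eq_mul]
    _ = B.card := by rw [hcard]; exact (Finset.sum_congr rfl fun p _ => himg p).symm
    _ ≤ (walkSet G v (n + 1)).card := Finset.card_le_card hsub

lemma prod_le_card (k : ℕ) (h : ∀ ℓ < k, 2 ^ ℓ ≤ G.minDegree) :
    ∏ ℓ ∈ Finset.range k, (G.minDegree + 1 - 2 ^ ℓ) ≤ (walkSet G v k).card := by
  induction k with
  | zero =>
      simp only [Finset.range_zero, Finset.prod_empty]
      refine Finset.card_pos.2 ⟨fun _ => v, ?_⟩
      simp only [walkSet, Finset.mem_filter, Finset.mem_univ, true_and]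
      exact ⟨fun i => i.elim0, fun I hI => hI.choose.elim0⟩
  | succ n ih =>
      calc ∏ ℓ ∈ Finset.range (n + 1), (G.minDegree + 1 - 2 ^ ℓ)
          = (∏ ℓ ∈ Finset.range n, (G.minDegree + 1 - 2 ^ ℓ))
              * (G.minDegree + 1 - 2 ^ n) := Finset.prod_range_succ _ _
        _ ≤ (walkSet G v n).card * (G.minDegree + 1 - 2 ^ n) :=
            Nat.mul_le_mul_right _ (ih fun ℓ hℓ => h ℓ (hℓ.trans (Nat.lt_succ_self n)))
        _ ≤ (walkSet G v (n + 1)).card := card_step G v n (h n (Nat.lt_succ_self n))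

end IrrAux


/-- In a finite graph on points of the plane with minimum degree `δ` and
`2^(k-1) ≤ δ`, the number of irredundant walks with `k` edges starting at any
fixed vertex `v` is at least `∏_{ℓ=0}^{k-1} (δ - 2^ℓ + 1)`. -/
theorem card_irredundant_walks_ge (V : Finset ℂ) (G : SimpleGraph V)
    [DecidableRel G.Adj] (k : ℕ) (hk : 1 ≤ k)
    (hδ : 2 ^ (k - 1) ≤ G.minDegree) (v : V) :
    (∏ ℓ ∈ Finset.range k, ((G.minDegree : ℝ) - 2 ^ ℓ + 1)) ≤
      ({p : Fin (k + 1) → V | p 0 = v ∧ IrredundantWalk G k p}.ncard : ℝ) := by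
  classical
  have hpow : ∀ ℓ < k, 2 ^ ℓ ≤ G.minDegree := fun ℓ hℓ =>
    le_trans (Nat.pow_le_pow_right (by norm_num) (by omega)) hδ
  have hcount := IrrAux.prod_le_card G v k hpow
  have hncard : {p : Fin (k + 1) → V | p 0 = v ∧ IrredundantWalk G k p}.ncard
      = (IrrAux.walkSet G v k).card := by
    rw [Set.ncard_eq_toFinset_card']
    congr 1
    ext p
    simp [IrrAux.walkSet, Set.mem_toFinset]
  rw [hncard]
  calc ∏ ℓ ∈ Finset.range k, ((G.minDegree : ℝ) - 2 ^ ℓ + 1)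
      = ((∏ ℓ ∈ Finset.range k, (G.minDegree + 1 - 2 ^ ℓ) : ℕ) : ℝ) := by
        rw [Nat.cast_prod]
        refine Finset.prod_congr rfl fun ℓ hℓ => ?_
        have h2 : 2 ^ ℓ ≤ G.minDegree := hpow ℓ (Finset.mem_range.1 hℓ)
        have hc : ((G.minDegree + 1 - 2 ^ ℓ : ℕ) : ℝ)
            = (G.minDegree : ℝ) + 1 - 2 ^ ℓ := by
          rw [Nat.cast_sub (le_trans h2 (Nat.le_succ _))]
          push_cast
          ring
        rw [hc]; ring
    _ ≤ _ := Nat.cast_le.2 hcount
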